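/- Let D ⊆ ℂ be open, h₁, h₂ : D → ℂ holomorphic, and a = (i·cosh h₁, sinh h₁, cosh h₂, i·sinh h₂) : D → ℂ⁴. Define k₁ = ‖a‖²·‖a′‖² − |ā·a′|² and k₂ = −det(a, ā, a′, ā′) (the determinant of the 4×4 complex matrix with these columns). Then on D: k₁ + k₂ = 2·|h₁′ + h₂′|²·cosh²(Re h₁ − Re h₂) and k₁ − k₂ = 2·|h₁′ − h₂′|²·cosh²(Re h₁ + Re h₂). In particular both k₁ + k₂ and k₁ − k₂ are nonnegative real, and k₂ is real. -/

import Mathlib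

open Complex Finset

/-- Bilinear (complex) dot product on `ℂ⁴`. -/
noncomputable def cdot (a b : Fin 4 → ℂ) : ℂ := ∑ j, a j * b j

/-- Hermitian norm squared on `ℂ⁴`. -/
noncomputable def hnormSq (a : Fin 4 → ℂ) : ℝ := ∑ j, ‖a j‖ ^ 2

private lemma det_fin_four' (A : Matrix (Fin 4) (Fin 4) ℂ) :
    A.det = A 0 0 * A 1 1 * A 2 2 * A 3 3 - A 0 0 * A 1 1 * A 2 3 * A 3 2 - A 0 0 * A 1 2 * A 2 1 * A 3 3 + A 0 0 * A 1 2 * A 2 3 * A 3 1 + A 0 0 * A 1 3 * A 2 1 * A 3 2 - A 0 0 * A 1 3 * A 2 2 * A 3 1 - A 0 1 * A 1 0 * A 2 2 * A 3 3 + A 0 1 * A 1 0 * A 2 3 * A 3 2 + A 0 1 * A 1 2 * A 2 0 * A 3 3 - A 0 1 * A 1 2 * A 2 3 * A 3 0 - A 0 1 * A 1 3 * A 2 0 * A 3 2 + A 0 1 * A 1 3 * A 2 2 * A 3 0 + A 0 2 * A 1 0 * A 2 1 * A 3 3 - A 0 2 * A 1 0 * A 2 3 * A 3 1 - A 0 2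 * A 1 1 * A 2 0 * A 3 3 + A 0 2 * A 1 1 * A 2 3 * A 3 0 + A 0 2 * A 1 3 * A 2 0 * A 3 1 - A 0 2 * A 1 3 * A 2 1 * A 3 0 - A 0 3 * A 1 0 * A 2 1 * A 3 2 + A 0 3 * A 1 0 * A 2 2 * A 3 1 + A 0 3 * A 1 1 * A 2 0 * A 3 2 - A 0 3 * A 1 1 * A 2 2 * A 3 0 - A 0 3 * A 1 2 * A 2 0 * A 3 1 + A 0 3 * A 1 2 * A 2 1 * A 3 0 := by
  simp [Matrix.det_succ_row_zero, Fin.sum_univ_succ]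
  simp only [show (Fin.succ 2 : Fin 4) = 3 from rfl,
    show ((2:Fin 4).succAbove 2) = 3 from rfl,
    show ((1:Fin 4).succAbove 2) = 3 from rfl,
    show ((3:Fin 4).succAbove 2) = 2 from rfl,
    show (Fin.castSucc (2:Fin 3) : Fin 4) = 2 from rfl]
  ring

set_option maxHeartbeats 1000000 in
/-- STATEMENT 9: for holomorphic `h₁, h₂` on an open `D ⊆ ℂ`,
`a = (i cosh h₁, sinh h₁, cosh h₂, i sinh h₂)`,
`k₁ = ‖a‖²‖a′‖² - |ā·a′|²`, and `k₂ = -det(a, ā, a′, ā′)`, on `D`: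
`k₁ + k₂ = 2|h₁′+h₂′|² cosh²(Re h₁ - Re h₂)` and
`k₁ - k₂ = 2|h₁′-h₂′|² cosh²(Re h₁ + Re h₂)`; in particular `k₂` is real. -/
theorem stmt9 (D : Set ℂ) (hD : IsOpen D) (h₁ h₂ : ℂ → ℂ)
    (hh₁ : DifferentiableOn ℂ h₁ D) (hh₂ : DifferentiableOn ℂ h₂ D)
    (a : ℂ → (Fin 4 → ℂ))
    (ha : ∀ t, a t = ![Complex.I * Complex.cosh (h₁ t), Complex.sinh (h₁ t),
                       Complex.cosh (h₂ t), Complex.I * Complex.sinh (h₂ t)])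
    (a' : ℂ → (Fin 4 → ℂ))
    (ha' : ∀ t j, a' t j = deriv (fun z => a z j) t)
    (k₁ : ℂ → ℝ)
    (hk₁ : ∀ t, k₁ t = hnormSq (a t) * hnormSq (a' t) -
      ‖cdot (fun j => starRingEnd ℂ (a t j)) (a' t)‖ ^ 2)
    (k₂ : ℂ → ℂ)
    (hk₂ : ∀ t, k₂ t = -(Matrix.of (fun (i j : Fin 4) =>
      ![a t, fun i => starRingEnd ℂ (a t i), a' t,
        fun i => starRingEnd ℂ (a' t i)] j i)).det) :
    ∀ t ∈ D,
      (k₁ t : ℂ) + k₂ t =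
        ((2 * ‖deriv h₁ t + deriv h₂ t‖ ^ 2 *
          (Real.cosh ((h₁ t).re - (h₂ t).re)) ^ 2 : ℝ) : ℂ) ∧
      (k₁ t : ℂ) - k₂ t =
        ((2 * ‖deriv h₁ t - deriv h₂ t‖ ^ 2 *
          (Real.cosh ((h₁ t).re + (h₂ t).re)) ^ 2 : ℝ) : ℂ) ∧
      (k₂ t).im = 0 ∧
      0 ≤ k₁ t + (k₂ t).re ∧ 0 ≤ k₁ t - (k₂ t).re := by
  intro t ht
  have hmem := hD.mem_nhds ht
  have hd1 : DifferentiableAt ℂ h₁ t := hh₁.differentiableAt hmem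
  have hd2 : DifferentiableAt ℂ h₂ t := hh₂.differentiableAt hmem
  have e0 : a' t 0 = Complex.I * (Complex.sinh (h₁ t) * deriv h₁ t) := by
    rw [ha' t 0, show (fun z => a z 0) = fun z => Complex.I * Complex.cosh (h₁ z) from
      funext fun z => by rw [ha z]; simp]
    exact (HasDerivAt.const_mul Complex.I hd1.hasDerivAt.ccosh).deriv
  have e1 : a' t 1 = Complex.cosh (h₁ t) * deriv h₁ t := by
    rw [ha' t 1, show (fun z => a z 1) = fun z => Complex.sinh (h₁ z) from
      funext fun z => by rw [ha z]; simp]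
    exact hd1.hasDerivAt.csinh.deriv
  have e2 : a' t 2 = Complex.sinh (h₂ t) * deriv h₂ t := by
    rw [ha' t 2, show (fun z => a z 2) = fun z => Complex.cosh (h₂ z) from
      funext fun z => by rw [ha z]; simp]
    exact hd2.hasDerivAt.ccosh.deriv
  have e3 : a' t 3 = Complex.I * (Complex.cosh (h₂ t) * deriv h₂ t) := by
    rw [ha' t 3, show (fun z => a z 3) = fun z => Complex.I * Complex.sinh (h₂ z) from
      funext fun z => by rw [ha z]; simp]
    exact (HasDerivAt.const_mul Complex.I hd2.hasDerivAt.csinh).deriv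
  have hav' : a' t = ![Complex.I * (Complex.sinh (h₁ t) * deriv h₁ t),
      Complex.cosh (h₁ t) * deriv h₁ t, Complex.sinh (h₂ t) * deriv h₂ t,
      Complex.I * (Complex.cosh (h₂ t) * deriv h₂ t)] := by
    funext j
    fin_cases j
    · exact e0
    · exact e1
    · exact e2
    · exact e3
  have hns : ∀ w : ℂ, ((‖w‖ : ℂ))^2 = w * (starRingEnd ℂ) w := fun w => by
    rw [Complex.mul_conj, Complex.normSq_eq_norm_sq]; push_cast; ring
  have hcs : ∀ x : ℝ, Real.cosh x ^ 2 = (Real.cosh (2*x) + 1)/2 := fun x => by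
    rw [two_mul, Real.cosh_add]; linear_combination (Real.cosh_sq_sub_sinh_sq x)/2
  have harg1 : (2*(((h₁ t).re : ℂ) - ((h₂ t).re : ℂ))) =
      (h₁ t + (starRingEnd ℂ) (h₁ t)) - (h₂ t + (starRingEnd ℂ) (h₂ t)) := by
    rw [Complex.add_conj, Complex.add_conj]; push_cast; ring
  have harg2 : (2*(((h₁ t).re : ℂ) + ((h₂ t).re : ℂ))) =
      (h₁ t + (starRingEnd ℂ) (h₁ t)) + (h₂ t + (starRingEnd ℂ) (h₂ t)) := by
    rw [Complex.add_conj, Complex.add_conj]; push_cast; ring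
  have R0 : Complex.cosh (h₁ t) ^ 2 - Complex.sinh (h₁ t) ^ 2 = 1 :=
    Complex.cosh_sq_sub_sinh_sq (h₁ t)
  have R2 : Complex.cosh (h₂ t) ^ 2 - Complex.sinh (h₂ t) ^ 2 = 1 :=
    Complex.cosh_sq_sub_sinh_sq (h₂ t)
  have R1 : ((starRingEnd ℂ) (Complex.cosh (h₁ t))) ^ 2 -
      ((starRingEnd ℂ) (Complex.sinh (h₁ t))) ^ 2 = 1 := by
    rw [← map_pow, ← map_pow, ← map_sub, Complex.cosh_sq_sub_sinh_sq, map_one]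
  have R3 : ((starRingEnd ℂ) (Complex.cosh (h₂ t))) ^ 2 -
      ((starRingEnd ℂ) (Complex.sinh (h₂ t))) ^ 2 = 1 := by
    rw [← map_pow, ← map_pow, ← map_sub, Complex.cosh_sq_sub_sinh_sq, map_one]
  have hk1v : ((k₁ t : ℝ) : ℂ) = (1) * Complex.sinh (h₂ t)^2 * (starRingEnd ℂ) (Complex.sinh (h₂ t))^2 * deriv h₂ t * (starRingEnd ℂ) (deriv h₂ t) + (-1) * Complex.sinh (h₂ t)^2 * (starRingEnd ℂ) (Complex.cosh (h₂ t))^2 * deriv h₂ t * (starRingEnd ℂ) (deriv h₂ t) + (-1) * Complex.cosh (h₂ t)^2 * (starRingEnd ℂ) (Complex.sinh (h₂ t))^2 * deriv h₂ t * (starRingEnd ℂ) (deriv h₂ t) + (1) * Complex.cosh (h₂ t)^2 * (starRingEnd ℂ) (Complex.cosh (h₂ t))^2 * deriv h₂ t * (starRingEnd ℂ) (deriv h₂ t) + (1) * Complex.sinh (h₁ t) * (starRingEnd ℂ) (Complex.sinh (h₁ t)) * Complex.sinh (h₂ t) * (starRingEnd ℂ) (Complex.sinh (h₂ t)) * deriv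 h₂ t * (starRingEnd ℂ) (deriv h₂ t) + (1) * Complex.sinh (h₁ t) * (starRingEnd ℂ) (Complex.sinh (h₁ t)) * Complex.sinh (h₂ t) * (starRingEnd ℂ) (Complex.sinh (h₂ t)) * deriv h₁ t * (starRingEnd ℂ) (deriv h₁ t) + (1) * Complex.sinh (h₁ t) * (starRingEnd ℂ) (Complex.sinh (h₁ t)) * Complex.cosh (h₂ t) * (starRingEnd ℂ) (Complex.cosh (h₂ t)) * deriv h₂ t * (starRingEnd ℂ) (deriv h₂ t) + (1) * Complex.sinh (h₁ t) * (starRingEnd ℂ) (Complex.sinh (h₁ t)) * Complex.cosh (h₂ t) * (starRingEnd ℂ) (Complex.cosh (h₂ t)) * deriv h₁ t * (starRingEnd ℂ) (deriv h₁ t) + (-1) * Complex.sinh (h₁ t) * (starRingEnd ℂ) (Complex.cosh (h₁ t)) * Complex.sinh (h₂ t) * (starRingEnd ℂ) (Complex.cosh (h₂ t)) * (starRingEnd ℂ) (deriv h₁ t) * deriv h₂ t + (-1) * Complex.sinh (h₁ t) * (starRingEnd ℂ) (Complex.cosh (h₁ t)) * Complex.sinh (h₂ t) * (starRingEnd ℂ)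 (Complex.cosh (h₂ t)) * deriv h₁ t * (starRingEnd ℂ) (deriv h₂ t) + (-1) * Complex.sinh (h₁ t) * (starRingEnd ℂ) (Complex.cosh (h₁ t)) * Complex.cosh (h₂ t) * (starRingEnd ℂ) (Complex.sinh (h₂ t)) * (starRingEnd ℂ) (deriv h₁ t) * deriv h₂ t + (-1) * Complex.sinh (h₁ t) * (starRingEnd ℂ) (Complex.cosh (h₁ t)) * Complex.cosh (h₂ t) * (starRingEnd ℂ) (Complex.sinh (h₂ t)) * deriv h₁ t * (starRingEnd ℂ) (deriv h₂ t) + (1) * Complex.sinh (h₁ t)^2 * (starRingEnd ℂ) (Complex.sinh (h₁ t))^2 * deriv h₁ t * (starRingEnd ℂ) (deriv h₁ t) + (-1) * Complex.sinh (h₁ t)^2 * (starRingEnd ℂ) (Complex.cosh (h₁ t))^2 * deriv h₁ t * (starRingEnd ℂ) (deriv h₁ t) + (-1) * Complex.cosh (h₁ t) * (starRingEnd ℂ) (Complex.sinh (h₁ t)) * Complex.sinh (h₂ t) * (starRingEnd ℂ) (Complex.cosh (h₂ t)) * (starRingEnd ℂ) (deriv h₁ t) * deriv h₂ t + (-1)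 * Complex.cosh (h₁ t) * (starRingEnd ℂ) (Complex.sinh (h₁ t)) * Complex.sinh (h₂ t) * (starRingEnd ℂ) (Complex.cosh (h₂ t)) * deriv h₁ t * (starRingEnd ℂ) (deriv h₂ t) + (-1) * Complex.cosh (h₁ t) * (starRingEnd ℂ) (Complex.sinh (h₁ t)) * Complex.cosh (h₂ t) * (starRingEnd ℂ) (Complex.sinh (h₂ t)) * (starRingEnd ℂ) (deriv h₁ t) * deriv h₂ t + (-1) * Complex.cosh (h₁ t) * (starRingEnd ℂ) (Complex.sinh (h₁ t)) * Complex.cosh (h₂ t) * (starRingEnd ℂ) (Complex.sinh (h₂ t)) * deriv h₁ t * (starRingEnd ℂ) (deriv h₂ t) + (1) * Complex.cosh (h₁ t) * (starRingEnd ℂ) (Complex.cosh (h₁ t)) * Complex.sinh (h₂ t) * (starRingEnd ℂ) (Complex.sinh (h₂ t)) * deriv h₂ t * (starRingEnd ℂ) (deriv h₂ t) + (1) * Complex.cosh (h₁ t) * (starRingEnd ℂ) (Complex.cosh (h₁ t)) * Complex.sinh (h₂ t) * (starRingEnd ℂ) (Complex.sinh (h₂ t)) * deriv h₁ t * (starRingEnd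 ℂ) (deriv h₁ t) + (1) * Complex.cosh (h₁ t) * (starRingEnd ℂ) (Complex.cosh (h₁ t)) * Complex.cosh (h₂ t) * (starRingEnd ℂ) (Complex.cosh (h₂ t)) * deriv h₂ t * (starRingEnd ℂ) (deriv h₂ t) + (1) * Complex.cosh (h₁ t) * (starRingEnd ℂ) (Complex.cosh (h₁ t)) * Complex.cosh (h₂ t) * (starRingEnd ℂ) (Complex.cosh (h₂ t)) * deriv h₁ t * (starRingEnd ℂ) (deriv h₁ t) + (-1) * Complex.cosh (h₁ t)^2 * (starRingEnd ℂ) (Complex.sinh (h₁ t))^2 * deriv h₁ t * (starRingEnd ℂ) (deriv h₁ t) + (1) * Complex.cosh (h₁ t)^2 * (starRingEnd ℂ) (Complex.cosh (h₁ t))^2 * deriv h₁ t * (starRingEnd ℂ) (deriv h₁ t) := by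
    rw [hk₁ t]
    push_cast
    rw [hnormSq, hnormSq, cdot]
    push_cast
    simp only [Fin.sum_univ_four, hns]
    rw [ha t, hav']
    simp only [Matrix.cons_val_zero, Matrix.cons_val_one, Matrix.head_cons,
      Matrix.cons_val_two, Matrix.tail_cons, Matrix.cons_val_three,
      map_mul, map_add, map_neg, Complex.conj_I, Complex.conj_conj]
    ring_nf
    simp only [Complex.I_sq, Complex.I_pow_four]
    ring
  have hk2v : k₂ t = (1) * (starRingEnd ℂ) (Complex.sinh (h₁ t))^2 * Complex.sinh (h₂ t)^2 * (starRingEnd ℂ) (deriv h₁ t) * deriv h₂ t + (-1) * (starRingEnd ℂ) (Complex.sinh (h₁ t))^2 * Complex.cosh (h₂ t)^2 * (starRingEnd ℂ) (deriv h₁ t) * deriv h₂ t + (-1) * (starRingEnd ℂ) (Complex.cosh (h₁ t))^2 * Complex.sinh (h₂ t)^2 * (starRingEnd ℂ) (deriv h₁ t) * deriv h₂ t + (1) * (starRingEnd ℂ) (Complex.cosh (h₁ t))^2 * Complex.cosh (h₂ t)^2 * (starRingEnd ℂ) (deriv h₁ t) * deriv h₂ t + (1) * Complex.sinh (h₁ t)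 * (starRingEnd ℂ) (Complex.sinh (h₁ t)) * Complex.sinh (h₂ t) * (starRingEnd ℂ) (Complex.sinh (h₂ t)) * (starRingEnd ℂ) (deriv h₁ t) * deriv h₂ t + (1) * Complex.sinh (h₁ t) * (starRingEnd ℂ) (Complex.sinh (h₁ t)) * Complex.sinh (h₂ t) * (starRingEnd ℂ) (Complex.sinh (h₂ t)) * deriv h₁ t * (starRingEnd ℂ) (deriv h₂ t) + (1) * Complex.sinh (h₁ t) * (starRingEnd ℂ) (Complex.sinh (h₁ t)) * Complex.cosh (h₂ t) * (starRingEnd ℂ) (Complex.cosh (h₂ t)) * (starRingEnd ℂ) (deriv h₁ t) * deriv h₂ t + (1) * Complex.sinh (h₁ t) * (starRingEnd ℂ) (Complex.sinh (h₁ t)) * Complex.cosh (h₂ t) * (starRingEnd ℂ) (Complex.cosh (h₂ t)) * deriv h₁ t * (starRingEnd ℂ) (deriv h₂ t) + (-1) * Complex.sinh (h₁ t) * (starRingEnd ℂ) (Complex.cosh (h₁ t)) * Complex.sinh (h₂ t) * (starRingEnd ℂ) (Complex.cosh (h₂ t)) * deriv h₂ t * (starRingEnd ℂ) (deriv h₂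 t) + (-1) * Complex.sinh (h₁ t) * (starRingEnd ℂ) (Complex.cosh (h₁ t)) * Complex.sinh (h₂ t) * (starRingEnd ℂ) (Complex.cosh (h₂ t)) * deriv h₁ t * (starRingEnd ℂ) (deriv h₁ t) + (-1) * Complex.sinh (h₁ t) * (starRingEnd ℂ) (Complex.cosh (h₁ t)) * Complex.cosh (h₂ t) * (starRingEnd ℂ) (Complex.sinh (h₂ t)) * deriv h₂ t * (starRingEnd ℂ) (deriv h₂ t) + (-1) * Complex.sinh (h₁ t) * (starRingEnd ℂ) (Complex.cosh (h₁ t)) * Complex.cosh (h₂ t) * (starRingEnd ℂ) (Complex.sinh (h₂ t)) * deriv h₁ t * (starRingEnd ℂ) (deriv h₁ t) + (1) * Complex.sinh (h₁ t)^2 * (starRingEnd ℂ) (Complex.sinh (h₂ t))^2 * deriv h₁ t * (starRingEnd ℂ) (deriv h₂ t) + (-1) * Complex.sinh (h₁ t)^2 * (starRingEnd ℂ) (Complex.cosh (h₂ t))^2 * deriv h₁ t * (starRingEnd ℂ) (deriv h₂ t) + (-1) * Complex.cosh (h₁ t) * (starRingEnd ℂ) (Complex.sinh (h₁ t)) * Complex.sinh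 (h₂ t) * (starRingEnd ℂ) (Complex.cosh (h₂ t)) * deriv h₂ t * (starRingEnd ℂ) (deriv h₂ t) + (-1) * Complex.cosh (h₁ t) * (starRingEnd ℂ) (Complex.sinh (h₁ t)) * Complex.sinh (h₂ t) * (starRingEnd ℂ) (Complex.cosh (h₂ t)) * deriv h₁ t * (starRingEnd ℂ) (deriv h₁ t) + (-1) * Complex.cosh (h₁ t) * (starRingEnd ℂ) (Complex.sinh (h₁ t)) * Complex.cosh (h₂ t) * (starRingEnd ℂ) (Complex.sinh (h₂ t)) * deriv h₂ t * (starRingEnd ℂ) (deriv h₂ t) + (-1) * Complex.cosh (h₁ t) * (starRingEnd ℂ) (Complex.sinh (h₁ t)) * Complex.cosh (h₂ t) * (starRingEnd ℂ) (Complex.sinh (h₂ t)) * deriv h₁ t * (starRingEnd ℂ) (deriv h₁ t) + (1) * Complex.cosh (h₁ t) * (starRingEnd ℂ) (Complex.cosh (h₁ t)) * Complex.sinh (h₂ t) * (starRingEnd ℂ) (Complex.sinh (h₂ t)) * (starRingEnd ℂ) (deriv h₁ t) * deriv h₂ t + (1) * Complex.cosh (h₁ t) * (starRingEnd ℂ)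 (Complex.cosh (h₁ t)) * Complex.sinh (h₂ t) * (starRingEnd ℂ) (Complex.sinh (h₂ t)) * deriv h₁ t * (starRingEnd ℂ) (deriv h₂ t) + (1) * Complex.cosh (h₁ t) * (starRingEnd ℂ) (Complex.cosh (h₁ t)) * Complex.cosh (h₂ t) * (starRingEnd ℂ) (Complex.cosh (h₂ t)) * (starRingEnd ℂ) (deriv h₁ t) * deriv h₂ t + (1) * Complex.cosh (h₁ t) * (starRingEnd ℂ) (Complex.cosh (h₁ t)) * Complex.cosh (h₂ t) * (starRingEnd ℂ) (Complex.cosh (h₂ t)) * deriv h₁ t * (starRingEnd ℂ) (deriv h₂ t) + (-1) * Complex.cosh (h₁ t)^2 * (starRingEnd ℂ) (Complex.sinh (h₂ t))^2 * deriv h₁ t * (starRingEnd ℂ) (deriv h₂ t) + (1) * Complex.cosh (h₁ t)^2 * (starRingEnd ℂ) (Complex.cosh (h₂ t))^2 * deriv h₁ t * (starRingEnd ℂ) (deriv h₂ t) := by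
    rw [hk₂ t, det_fin_four']
    simp only [Matrix.of_apply, Matrix.cons_val_zero, Matrix.cons_val_one, Matrix.head_cons,
      Matrix.cons_val_two, Matrix.tail_cons, Matrix.cons_val_three]
    rw [ha t, hav']
    simp only [Matrix.cons_val_zero, Matrix.cons_val_one, Matrix.head_cons,
      Matrix.cons_val_two, Matrix.tail_cons, Matrix.cons_val_three,
      map_mul, map_add, map_neg, Complex.conj_I, Complex.conj_conj]
    ring_nf
    simp only [Complex.I_sq, Complex.I_pow_four]
    ring
  have key1 : (k₁ t : ℂ) + k₂ t =
      ((2 * ‖deriv h₁ t + deriv h₂ t‖ ^ 2 *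
        (Real.cosh ((h₁ t).re - (h₂ t).re)) ^ 2 : ℝ) : ℂ) := by
    rw [hk1v, hk2v, hcs]
    push_cast
    rw [hns, map_add, harg1, Complex.cosh_sub, Complex.cosh_add, Complex.cosh_add,
      Complex.sinh_add, Complex.sinh_add, Complex.cosh_conj, Complex.sinh_conj,
      Complex.cosh_conj, Complex.sinh_conj]
    linear_combination ((-1) * (starRingEnd ℂ) (Complex.sinh (h₂ t))^2 * deriv h₁ t * (starRingEnd ℂ) (deriv h₂ t) + (1) * (starRingEnd ℂ) (Complex.cosh (h₂ t))^2 * deriv h₁ t * (starRingEnd ℂ) (deriv h₂ t) + (-1) * (starRingEnd ℂ) (Complex.sinh (h₁ t))^2 * deriv h₁ t * (starRingEnd ℂ) (deriv h₁ t) + (1) * (starRingEnd ℂ) (Complex.cosh (h₁ t))^2 * deriv h₁ t * (starRingEnd ℂ) (deriv h₁ t)) * R0 + ((1) * deriv h₁ t * (starRingEnd ℂ) (deriv h₁ t) + (-1) * Complex.sinh (h₂ t)^2 * (starRingEnd ℂ) (deriv h₁ t) * deriv h₂ t + (1) * Complex.cosh (h₂ t)^2 * (starRingEnd ℂ) (deriv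 h₁ t) * deriv h₂ t) * R1 + ((1) * (starRingEnd ℂ) (deriv h₁ t) * deriv h₂ t + (-1) * (starRingEnd ℂ) (Complex.sinh (h₂ t))^2 * deriv h₂ t * (starRingEnd ℂ) (deriv h₂ t) + (1) * (starRingEnd ℂ) (Complex.cosh (h₂ t))^2 * deriv h₂ t * (starRingEnd ℂ) (deriv h₂ t)) * R2 + ((1) * deriv h₂ t * (starRingEnd ℂ) (deriv h₂ t) + (1) * deriv h₁ t * (starRingEnd ℂ) (deriv h₂ t)) * R3
  have key2 : (k₁ t : ℂ) - k₂ t =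
      ((2 * ‖deriv h₁ t - deriv h₂ t‖ ^ 2 *
        (Real.cosh ((h₁ t).re + (h₂ t).re)) ^ 2 : ℝ) : ℂ) := by
    rw [hk1v, hk2v, hcs]
    push_cast
    rw [hns, map_sub, harg2, Complex.cosh_add, Complex.cosh_add, Complex.cosh_add,
      Complex.sinh_add, Complex.sinh_add, Complex.cosh_conj, Complex.sinh_conj,
      Complex.cosh_conj, Complex.sinh_conj]
    linear_combination ((1) * (starRingEnd ℂ) (Complex.sinh (h₂ t))^2 * deriv h₁ t * (starRingEnd ℂ) (deriv h₂ t) + (-1) * (starRingEnd ℂ) (Complex.cosh (h₂ t))^2 * deriv h₁ t * (starRingEnd ℂ) (deriv h₂ t) + (-1) * (starRingEnd ℂ) (Complex.sinh (h₁ t))^2 * deriv h₁ t * (starRingEnd ℂ) (deriv h₁ t) + (1) * (starRingEnd ℂ) (Complex.cosh (h₁ t))^2 * deriv h₁ t * (starRingEnd ℂ) (deriv h₁ t)) * R0 + ((1) * deriv h₁ t * (starRingEnd ℂ) (deriv h₁ t) + (1) * Complex.sinh (h₂ t)^2 * (starRingEnd ℂ) (deriv h₁ t) * deriv h₂ t +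 (-1) * Complex.cosh (h₂ t)^2 * (starRingEnd ℂ) (deriv h₁ t) * deriv h₂ t) * R1 + ((-1) * (starRingEnd ℂ) (deriv h₁ t) * deriv h₂ t + (-1) * (starRingEnd ℂ) (Complex.sinh (h₂ t))^2 * deriv h₂ t * (starRingEnd ℂ) (deriv h₂ t) + (1) * (starRingEnd ℂ) (Complex.cosh (h₂ t))^2 * deriv h₂ t * (starRingEnd ℂ) (deriv h₂ t)) * R2 + ((1) * deriv h₂ t * (starRingEnd ℂ) (deriv h₂ t) + (-1) * deriv h₁ t * (starRingEnd ℂ) (deriv h₂ t)) * R3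
  refine ⟨key1, key2, ?_, ?_, ?_⟩
  · have hk2real : k₂ t =
        (((2 * ‖deriv h₁ t + deriv h₂ t‖ ^ 2 *
          (Real.cosh ((h₁ t).re - (h₂ t).re)) ^ 2 -
          2 * ‖deriv h₁ t - deriv h₂ t‖ ^ 2 *
          (Real.cosh ((h₁ t).re + (h₂ t).re)) ^ 2)/2 : ℝ) : ℂ) := by
      have k1' := key1
      have k2' := key2
      push_cast at k1' k2' ⊢
      linear_combination (k1' - k2')/2
    rw [hk2real, Complex.ofReal_im]
  · have hre := congrArg Complex.re key1
    simp only [Complex.add_re, Complex.ofReal_re] at hre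
    rw [hre]
    positivity
  · have hre := congrArg Complex.re key2
    simp only [Complex.sub_re, Complex.ofReal_re] at hre
    rw [hre]
    positivity
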